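/- Hall-block convolution (generalized Laplace along a zero block): Let n = p + q with d ≤ q, let A₁ = {0,…,p−1} and A₂ = {p,…,n−1} be the row blocks, and let B₁ = {0,…,p+d−1} and B₂ = {p+d,…,n−1} be the column blocks. There exists a sign function η assigning to each d-element subset T ⊆ B₁ a value η(T) ∈ {1, −1}, depending only on n, p, d and T, such that for every commutative ring R and every n × n matrix M over R satisfying M i j = 0 whenever i ∈ A₁ and j ∈ B₂, one has det M = ∑_{T ⊆ B₁, |T| = d} η(T) · det M[A₁, B₁ ∖ T] · det M[A₂, B₂ ∪ T], where M[S, S′] denotes the square submatrix of M on row set S and column set S′, each taken in increasing order. -/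

import Mathlib

/-- The row block `A₁ = {0, …, p−1}` inside `Fin (p+q)`. -/
def rowsA₁ (p q : ℕ) : Finset (Fin (p + q)) :=
  Finset.univ.filter (fun i => (i : ℕ) < p)

/-- The row block `A₂ = {p, …, p+q−1}` inside `Fin (p+q)`. -/
def rowsA₂ (p q : ℕ) : Finset (Fin (p + q)) :=
  Finset.univ.filter (fun i => p ≤ (i : ℕ))

/-- The column block `B₁ = {0, …, p+d−1}` inside `Fin (p+q)`. -/
def colsB₁ (p q d : ℕ) : Finset (Fin (p + q)) :=
  Finset.univ.filter (fun j => (j : ℕ) < p + d)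

/-- The column block `B₂ = {p+d, …, p+q−1}` inside `Fin (p+q)`. -/
def colsB₂ (p q d : ℕ) : Finset (Fin (p + q)) :=
  Finset.univ.filter (fun j => p + d ≤ (j : ℕ))

/-- The square submatrix `M[S, S′]` of `M` on row set `S` and column set `S′`, each
enumerated in increasing order. -/
def subMat {R : Type*} {n k : ℕ} (M : Matrix (Fin n) (Fin n) R)
    (S S' : Finset (Fin n)) (hS : S.card = k) (hS' : S'.card = k) :
    Matrix (Fin k) (Fin k) R :=
  Matrix.of fun a b => M (S.orderEmbOfFin hS a) (S'.orderEmbOfFin hS' b)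

lemma card_filter_coe_lt (n k : ℕ) (h : k ≤ n) :
    ((Finset.univ : Finset (Fin n)).filter (fun i : Fin n => (i : ℕ) < k)).card = k := by
  have heq : ((Finset.univ : Finset (Fin n)).filter (fun i : Fin n => (i : ℕ) < k))
      = (Finset.range k).attachFin
          (fun m hm => lt_of_lt_of_le (Finset.mem_range.mp hm) h) := by
    ext i
    simp [Finset.mem_attachFin]
  rw [heq, Finset.card_attachFin, Finset.card_range]

lemma card_filter_coe_ge (n k : ℕ) (h : k ≤ n) :
    ((Finset.univ : Finset (Fin n)).filter (fun i : Fin n => k ≤ (i : ℕ))).card = n - k := by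
  have h1 := card_filter_coe_lt n k h
  have h2 : ((Finset.univ : Finset (Fin n)).filter (fun i : Fin n => k ≤ (i : ℕ)))
      = ((Finset.univ : Finset (Fin n)).filter (fun i : Fin n => ¬ (i : ℕ) < k)) := by
    ext i; simp [not_lt]
  have h3 := Finset.card_filter_add_card_filter_not
    (s := (Finset.univ : Finset (Fin n))) (p := fun i : Fin n => (i : ℕ) < k)
  rw [Finset.card_univ, Fintype.card_fin] at h3
  rw [h2]
  omega

lemma card_rowsA₁ (p q : ℕ) : (rowsA₁ p q).card = p :=
  card_filter_coe_lt (p + q) p (Nat.le_add_right p q)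

lemma card_rowsA₂ (p q : ℕ) : (rowsA₂ p q).card = q := by
  have := card_filter_coe_ge (p + q) p (Nat.le_add_right p q)
  rw [rowsA₂, this]
  omega

lemma card_sdiff_T (p q d : ℕ) (hd : d ≤ q) (T : Finset (Fin (p + q)))
    (hT : T ∈ (colsB₁ p q d).powersetCard d) :
    (colsB₁ p q d \ T).card = p := by
  rw [Finset.mem_powersetCard] at hT
  have h1 : (colsB₁ p q d).card = p + d :=
    card_filter_coe_lt (p + q) (p + d) (by omega)
  rw [Finset.card_sdiff_of_subset hT.1, h1, hT.2]
  omega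

lemma card_union_T (p q d : ℕ) (hd : d ≤ q) (T : Finset (Fin (p + q)))
    (hT : T ∈ (colsB₁ p q d).powersetCard d) :
    (colsB₂ p q d ∪ T).card = q := by
  rw [Finset.mem_powersetCard] at hT
  have hdisj : Disjoint (colsB₂ p q d) T := by
    rw [Finset.disjoint_left]
    intro a ha haT
    have h1 : p + d ≤ (a : ℕ) := by simpa [colsB₂] using ha
    have h2 : (a : ℕ) < p + d := by simpa [colsB₁] using hT.1 haT
    omega
  have h1 : (colsB₂ p q d).card = (p + q) - (p + d) :=
    card_filter_coe_ge (p + q) (p + d) (by omega)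
  rw [Finset.card_union_of_disjoint hdisj, h1, hT.2]
  omega


section HallBlock

open Finset Equiv Equiv.Perm

variable {n p q : ℕ}

lemma pairBij (S S' : Finset (Fin n)) (hS : S.card = p) (hS' : S'.card = q)
    (hdisj : Disjoint S S') (huniv : S ∪ S' = Finset.univ) : Function.Bijective
    (Sum.elim (S.orderEmbOfFin hS) (S'.orderEmbOfFin hS') : Fin p ⊕ Fin q → Fin n) := by
  rw [Fintype.bijective_iff_injective_and_card]
  constructor
  · rintro (a | a) (b | b) hab <;> simp only [Sum.elim_inl, Sum.elim_inr] at hab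
    · exact congrArg Sum.inl ((S.orderEmbOfFin hS).injective hab)
    · have h1 := S.orderEmbOfFin_mem hS a
      have h2 := S'.orderEmbOfFin_mem hS' b
      rw [← hab] at h2
      exact absurd h2 (Finset.disjoint_left.mp hdisj h1)
    · have h1 := S.orderEmbOfFin_mem hS b
      have h2 := S'.orderEmbOfFin_mem hS' a
      rw [hab] at h2
      exact absurd h2 (Finset.disjoint_left.mp hdisj h1)
    · exact congrArg Sum.inr ((S'.orderEmbOfFin hS').injective hab)
  · have hcard := Finset.card_union_of_disjoint hdisj
    rw [huniv, Finset.card_univ, Fintype.card_fin, hS, hS'] at hcard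
    simp [Fintype.card_sum, ← hcard]

noncomputable def pairEquiv (S S' : Finset (Fin n)) (hS : S.card = p) (hS' : S'.card = q)
    (hdisj : Disjoint S S') (huniv : S ∪ S' = Finset.univ) : Fin p ⊕ Fin q ≃ Fin n :=
  Equiv.ofBijective _ (pairBij S S' hS hS' hdisj huniv)

variable {S S' : Finset (Fin n)} {hS : S.card = p} {hS' : S'.card = q}
  {hdisj : Disjoint S S'} {huniv : S ∪ S' = Finset.univ}

@[simp] lemma pairEquiv_inl (a : Fin p) :
    pairEquiv S S' hS hS' hdisj huniv (Sum.inl a) = S.orderEmbOfFin hS a := rfl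

@[simp] lemma pairEquiv_inr (b : Fin q) :
    pairEquiv S S' hS hS' hdisj huniv (Sum.inr b) = S'.orderEmbOfFin hS' b := rfl

lemma exists_pairEquiv_inl {j : Fin n} (hj : j ∈ S) :
    ∃ a, pairEquiv S S' hS hS' hdisj huniv (Sum.inl a) = j := by
  obtain ⟨x, hx⟩ := (pairEquiv S S' hS hS' hdisj huniv).surjective j
  cases x with
  | inl a => exact ⟨a, hx⟩
  | inr b =>
      exfalso
      have h2 : j ∈ S' := by rw [← hx]; exact S'.orderEmbOfFin_mem hS' b
      exact Finset.disjoint_left.mp hdisj hj h2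

lemma exists_pairEquiv_inr {j : Fin n} (hj : j ∈ S') :
    ∃ b, pairEquiv S S' hS hS' hdisj huniv (Sum.inr b) = j := by
  obtain ⟨x, hx⟩ := (pairEquiv S S' hS hS' hdisj huniv).surjective j
  cases x with
  | inr b => exact ⟨b, hx⟩
  | inl a =>
      exfalso
      have h2 : j ∈ S := by rw [← hx]; exact S.orderEmbOfFin_mem hS a
      exact Finset.disjoint_left.mp hdisj h2 hj

end HallBlock

section Specific

open Finset Equiv Equiv.Perm

@[simp] lemma mem_rowsA₁ {p q : ℕ} {i : Fin (p + q)} : i ∈ rowsA₁ p q ↔ (i : ℕ) < p := by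
  simp [rowsA₁]

@[simp] lemma mem_rowsA₂ {p q : ℕ} {i : Fin (p + q)} : i ∈ rowsA₂ p q ↔ p ≤ (i : ℕ) := by
  simp [rowsA₂]

@[simp] lemma mem_colsB₁ {p q d : ℕ} {j : Fin (p + q)} : j ∈ colsB₁ p q d ↔ (j : ℕ) < p + d := by
  simp [colsB₁]

@[simp] lemma mem_colsB₂ {p q d : ℕ} {j : Fin (p + q)} : j ∈ colsB₂ p q d ↔ p + d ≤ (j : ℕ) := by
  simp [colsB₂]

lemma rows_disjoint (p q : ℕ) : Disjoint (rowsA₁ p q) (rowsA₂ p q) := by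
  rw [Finset.disjoint_left]
  intro i h1 h2
  rw [mem_rowsA₁] at h1; rw [mem_rowsA₂] at h2; omega

lemma rows_union (p q : ℕ) : rowsA₁ p q ∪ rowsA₂ p q = Finset.univ := by
  ext i
  simp only [Finset.mem_union, mem_rowsA₁, mem_rowsA₂, Finset.mem_univ, iff_true]
  omega

lemma cols_disjoint (p q d : ℕ) (T : Finset (Fin (p + q)))
    (hT : T ∈ (colsB₁ p q d).powersetCard d) :
    Disjoint (colsB₁ p q d \ T) (colsB₂ p q d ∪ T) := by
  rw [Finset.disjoint_union_right]
  refine ⟨?_, Finset.sdiff_disjoint⟩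
  rw [Finset.disjoint_left]
  intro j hj hj2
  have h1 : (j : ℕ) < p + d := mem_colsB₁.mp (Finset.mem_sdiff.mp hj).1
  have h2 : p + d ≤ (j : ℕ) := mem_colsB₂.mp hj2
  omega

lemma cols_union (p q d : ℕ) (T : Finset (Fin (p + q)))
    (hT : T ∈ (colsB₁ p q d).powersetCard d) :
    (colsB₁ p q d \ T) ∪ (colsB₂ p q d ∪ T) = Finset.univ := by
  ext j
  simp only [Finset.mem_union, Finset.mem_sdiff, mem_colsB₁, mem_colsB₂, Finset.mem_univ,
    iff_true]
  by_cases hjT : j ∈ T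
  · exact Or.inr (Or.inr hjT)
  · by_cases hj : (j : ℕ) < p + d
    · exact Or.inl ⟨hj, hjT⟩
    · exact Or.inr (Or.inl (by omega))

noncomputable def rowE (p q : ℕ) : Fin p ⊕ Fin q ≃ Fin (p + q) :=
  pairEquiv (rowsA₁ p q) (rowsA₂ p q) (card_rowsA₁ p q) (card_rowsA₂ p q)
    (rows_disjoint p q) (rows_union p q)

noncomputable def colE (p q d : ℕ) (hd : d ≤ q) (T : Finset (Fin (p + q)))
    (hT : T ∈ (colsB₁ p q d).powersetCard d) : Fin p ⊕ Fin q ≃ Fin (p + q) :=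
  pairEquiv (colsB₁ p q d \ T) (colsB₂ p q d ∪ T)
    (card_sdiff_T p q d hd T hT) (card_union_T p q d hd T hT)
    (cols_disjoint p q d T hT) (cols_union p q d T hT)

noncomputable def ηfun (p q d : ℕ) (hd : d ≤ q) (T : Finset (Fin (p + q))) : ℤ :=
  if hT : T ∈ (colsB₁ p q d).powersetCard d then
    ((Equiv.Perm.sign ((colE p q d hd T hT).symm.trans (rowE p q))) : ℤ)
  else 1

noncomputable def Φmap (p q d : ℕ) (hd : d ≤ q)
    (T : {x // x ∈ (colsB₁ p q d).powersetCard d})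
    (σ₁ : Equiv.Perm (Fin p)) (σ₂ : Equiv.Perm (Fin q)) : Equiv.Perm (Fin (p + q)) :=
  (colE p q d hd T.1 T.2).symm.trans ((Equiv.sumCongr σ₁ σ₂).trans (rowE p q))

end Specific


section Phi

open Finset Equiv Equiv.Perm

variable {p q d : ℕ} {hd : d ≤ q}

lemma exists_rowE_inl {p q : ℕ} {j : Fin (p + q)} (hj : j ∈ rowsA₁ p q) :
    ∃ a, rowE p q (Sum.inl a) = j := exists_pairEquiv_inl hj

lemma exists_rowE_inr {p q : ℕ} {j : Fin (p + q)} (hj : j ∈ rowsA₂ p q) :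
    ∃ b, rowE p q (Sum.inr b) = j := exists_pairEquiv_inr hj

lemma exists_colE_inl {T : Finset (Fin (p + q))} {hT : T ∈ (colsB₁ p q d).powersetCard d}
    {j : Fin (p + q)} (hj : j ∈ colsB₁ p q d \ T) :
    ∃ a, colE p q d hd T hT (Sum.inl a) = j := exists_pairEquiv_inl hj

lemma exists_colE_inr {T : Finset (Fin (p + q))} {hT : T ∈ (colsB₁ p q d).powersetCard d}
    {j : Fin (p + q)} (hj : j ∈ colsB₂ p q d ∪ T) :
    ∃ b, colE p q d hd T hT (Sum.inr b) = j := exists_pairEquiv_inr hj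

lemma rowE_inl_mem (a : Fin p) : rowE p q (Sum.inl a) ∈ rowsA₁ p q :=
  (rowsA₁ p q).orderEmbOfFin_mem (card_rowsA₁ p q) a

lemma rowE_inr_mem (b : Fin q) : rowE p q (Sum.inr b) ∈ rowsA₂ p q :=
  (rowsA₂ p q).orderEmbOfFin_mem (card_rowsA₂ p q) b

lemma colE_inl_mem {T : Finset (Fin (p + q))} {hT : T ∈ (colsB₁ p q d).powersetCard d}
    (a : Fin p) : colE p q d hd T hT (Sum.inl a) ∈ colsB₁ p q d \ T :=
  (colsB₁ p q d \ T).orderEmbOfFin_mem (card_sdiff_T p q d hd T hT) a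

lemma colE_inr_mem {T : Finset (Fin (p + q))} {hT : T ∈ (colsB₁ p q d).powersetCard d}
    (b : Fin q) : colE p q d hd T hT (Sum.inr b) ∈ colsB₂ p q d ∪ T :=
  (colsB₂ p q d ∪ T).orderEmbOfFin_mem (card_union_T p q d hd T hT) b

lemma Φmap_colE (T : {x // x ∈ (colsB₁ p q d).powersetCard d})
    (σ₁ : Equiv.Perm (Fin p)) (σ₂ : Equiv.Perm (Fin q)) (x : Fin p ⊕ Fin q) :
    Φmap p q d hd T σ₁ σ₂ (colE p q d hd T.1 T.2 x)
      = rowE p q (Equiv.sumCongr σ₁ σ₂ x) := by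
  simp [Φmap]

lemma sign_Φmap (T : {x // x ∈ (colsB₁ p q d).powersetCard d})
    (σ₁ : Equiv.Perm (Fin p)) (σ₂ : Equiv.Perm (Fin q)) :
    Equiv.Perm.sign (Φmap p q d hd T σ₁ σ₂)
      = Equiv.Perm.sign ((colE p q d hd T.1 T.2).symm.trans (rowE p q))
        * (Equiv.Perm.sign σ₁ * Equiv.Perm.sign σ₂) := by
  have h : Φmap p q d hd T σ₁ σ₂
      = ((colE p q d hd T.1 T.2).symm.trans (rowE p q))
        * ((colE p q d hd T.1 T.2).permCongr (Equiv.sumCongr σ₁ σ₂)) := by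
    ext x
    simp [Φmap, Equiv.Perm.mul_apply, Equiv.permCongr_apply]
  rw [h, map_mul, Equiv.Perm.sign_permCongr, Equiv.Perm.sign_sumCongr]

lemma prod_Φmap {R : Type*} [CommRing R] (M : Matrix (Fin (p + q)) (Fin (p + q)) R)
    (T : {x // x ∈ (colsB₁ p q d).powersetCard d})
    (σ₁ : Equiv.Perm (Fin p)) (σ₂ : Equiv.Perm (Fin q)) :
    (∏ i, M (Φmap p q d hd T σ₁ σ₂ i) i)
      = (∏ a, subMat M (rowsA₁ p q) (colsB₁ p q d \ T.1)
            (card_rowsA₁ p q) (card_sdiff_T p q d hd T.1 T.2) (σ₁ a) a)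
        * ∏ b, subMat M (rowsA₂ p q) (colsB₂ p q d ∪ T.1)
            (card_rowsA₂ p q) (card_union_T p q d hd T.1 T.2) (σ₂ b) b := by
  rw [← Equiv.prod_comp (colE p q d hd T.1 T.2)
      (fun i => M (Φmap p q d hd T σ₁ σ₂ i) i), Fintype.prod_sum_type]
  congr 1
  · refine Finset.prod_congr rfl fun a _ => ?_
    rw [Φmap_colE]
    rfl
  · refine Finset.prod_congr rfl fun b _ => ?_
    rw [Φmap_colE]
    rfl

lemma Φmap_lt_of_mem_left (T : {x // x ∈ (colsB₁ p q d).powersetCard d})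
    (σ₁ : Equiv.Perm (Fin p)) (σ₂ : Equiv.Perm (Fin q)) {j : Fin (p + q)}
    (hj : j ∈ colsB₁ p q d \ T.1) :
    ((Φmap p q d hd T σ₁ σ₂ j : Fin (p + q)) : ℕ) < p := by
  obtain ⟨a, ha⟩ := exists_colE_inl (hT := T.2) hj
  rw [← ha, Φmap_colE]
  exact mem_rowsA₁.mp (rowE_inl_mem (σ₁ a))

lemma Φmap_le_of_mem_right (T : {x // x ∈ (colsB₁ p q d).powersetCard d})
    (σ₁ : Equiv.Perm (Fin p)) (σ₂ : Equiv.Perm (Fin q)) {j : Fin (p + q)}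
    (hj : j ∈ colsB₂ p q d ∪ T.1) :
    p ≤ ((Φmap p q d hd T σ₁ σ₂ j : Fin (p + q)) : ℕ) := by
  obtain ⟨b, hb⟩ := exists_colE_inr (hT := T.2) hj
  rw [← hb, Φmap_colE]
  exact mem_rowsA₂.mp (rowE_inr_mem (σ₂ b))

lemma Φmap_T_eq (T : {x // x ∈ (colsB₁ p q d).powersetCard d})
    (σ₁ : Equiv.Perm (Fin p)) (σ₂ : Equiv.Perm (Fin q)) :
    T.1 = Finset.univ.filter
      (fun j : Fin (p + q) => (j : ℕ) < p + d ∧ p ≤ ((Φmap p q d hd T σ₁ σ₂ j : Fin (p + q)) : ℕ)) := by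
  ext j
  simp only [Finset.mem_filter, Finset.mem_univ, true_and]
  constructor
  · intro hjT
    refine ⟨mem_colsB₁.mp ((Finset.mem_powersetCard.mp T.2).1 hjT), ?_⟩
    exact Φmap_le_of_mem_right T σ₁ σ₂ (Finset.mem_union_right _ hjT)
  · rintro ⟨h1, h2⟩
    by_contra hjT
    have hj : j ∈ colsB₁ p q d \ T.1 :=
      Finset.mem_sdiff.mpr ⟨mem_colsB₁.mpr h1, hjT⟩
    have := Φmap_lt_of_mem_left (hd := hd) T σ₁ σ₂ hj
    omega


lemma Φmap_inj (T T' : {x // x ∈ (colsB₁ p q d).powersetCard d})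
    (σ₁ σ₁' : Equiv.Perm (Fin p)) (σ₂ σ₂' : Equiv.Perm (Fin q))
    (hE : Φmap p q d hd T σ₁ σ₂ = Φmap p q d hd T' σ₁' σ₂') :
    T = T' ∧ σ₁ = σ₁' ∧ σ₂ = σ₂' := by
  have hTT : T = T' := by
    refine Subtype.ext ?_
    have e1 : T.1 = _ := Φmap_T_eq (hd := hd) T σ₁ σ₂
    have e2 : T'.1 = _ := Φmap_T_eq (hd := hd) T' σ₁' σ₂'
    rw [e1, e2, hE]
  subst hTT
  have key : ∀ x, rowE p q (Equiv.sumCongr σ₁ σ₂ x) = rowE p q (Equiv.sumCongr σ₁' σ₂' x) := by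
    intro x
    have h := congrArg
      (fun σ : Equiv.Perm (Fin (p + q)) => σ (colE p q d hd T.1 T.2 x)) hE
    simpa only [Φmap_colE] using h
  refine ⟨rfl, ?_, ?_⟩
  · ext a
    have h := (rowE p q).injective (key (Sum.inl a))
    have h' : σ₁ a = σ₁' a := by simpa using h
    exact congrArg Fin.val h'
  · ext b
    have h := (rowE p q).injective (key (Sum.inr b))
    have h' : σ₂ b = σ₂' b := by simpa using h
    exact congrArg Fin.val h'

end Phi

/-- Hall-block convolution (generalized Laplace expansion along a zero block): for
`n = p + q` and `d ≤ q`, there is a sign function `η(T) ∈ {1, −1}`, depending only on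
`n, p, d, T`, such that for every commutative ring `R` and every `n × n` matrix `M`
with `M i j = 0` whenever `i ∈ A₁` and `j ∈ B₂`, one has
`det M = ∑_{T ⊆ B₁, |T| = d} η(T) · det M[A₁, B₁ ∖ T] · det M[A₂, B₂ ∪ T]`. -/
theorem hall_block_convolution (p q d : ℕ) (hd : d ≤ q) :
    ∃ η : Finset (Fin (p + q)) → ℤ,
      (∀ T ∈ (colsB₁ p q d).powersetCard d, η T = 1 ∨ η T = -1) ∧
      ∀ (R : Type*) [CommRing R] (M : Matrix (Fin (p + q)) (Fin (p + q)) R),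
        (∀ i j : Fin (p + q), (i : ℕ) < p → p + d ≤ (j : ℕ) → M i j = 0) →
        M.det = ∑ T ∈ ((colsB₁ p q d).powersetCard d).attach,
          (η T.1 : R) *
            (subMat M (rowsA₁ p q) (colsB₁ p q d \ T.1)
              (card_rowsA₁ p q) (card_sdiff_T p q d hd T.1 T.2)).det *
            (subMat M (rowsA₂ p q) (colsB₂ p q d ∪ T.1)
              (card_rowsA₂ p q) (card_union_T p q d hd T.1 T.2)).det := by
  classical
  refine ⟨ηfun p q d hd, ?_, ?_⟩
  · intro T hT
    rw [ηfun, dif_pos hT]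
    rcases Int.units_eq_one_or
        (Equiv.Perm.sign ((colE p q d hd T hT).symm.trans (rowE p q))) with h | h <;>
      rw [h] <;> simp
  · intro R _ M hM
    have hval : ∀ (T : {x // x ∈ (colsB₁ p q d).powersetCard d})
        (σ₁ : Equiv.Perm (Fin p)) (σ₂ : Equiv.Perm (Fin q)),
        ((Equiv.Perm.sign (Φmap p q d hd T σ₁ σ₂) : ℤ) : R)
            * ∏ i, M (Φmap p q d hd T σ₁ σ₂ i) i
          = (ηfun p q d hd T.1 : R) *
            (((Equiv.Perm.sign σ₁ : ℤ) : R) * ∏ a, subMat M (rowsA₁ p q) (colsB₁ p q d \ T.1)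
              (card_rowsA₁ p q) (card_sdiff_T p q d hd T.1 T.2) (σ₁ a) a) *
            (((Equiv.Perm.sign σ₂ : ℤ) : R) * ∏ b, subMat M (rowsA₂ p q) (colsB₂ p q d ∪ T.1)
              (card_rowsA₂ p q) (card_union_T p q d hd T.1 T.2) (σ₂ b) b) := by
      intro T σ₁ σ₂
      rw [prod_Φmap, sign_Φmap, ηfun, dif_pos T.2]
      push_cast [Units.val_mul]
      ring
    have hTsum : ∀ T : {x // x ∈ (colsB₁ p q d).powersetCard d},
        (ηfun p q d hd T.1 : R) *
          (subMat M (rowsA₁ p q) (colsB₁ p q d \ T.1)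
            (card_rowsA₁ p q) (card_sdiff_T p q d hd T.1 T.2)).det *
          (subMat M (rowsA₂ p q) (colsB₂ p q d ∪ T.1)
            (card_rowsA₂ p q) (card_union_T p q d hd T.1 T.2)).det
        = ∑ y : Equiv.Perm (Fin p) × Equiv.Perm (Fin q),
            ((Equiv.Perm.sign (Φmap p q d hd T y.1 y.2) : ℤ) : R)
              * ∏ i, M (Φmap p q d hd T y.1 y.2 i) i := by
      intro T
      have esplit : (∑ y : Equiv.Perm (Fin p) × Equiv.Perm (Fin q),
            ((Equiv.Perm.sign (Φmap p q d hd T y.1 y.2) : ℤ) : R)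
              * ∏ i, M (Φmap p q d hd T y.1 y.2 i) i)
          = ∑ σ₁ : Equiv.Perm (Fin p), ∑ σ₂ : Equiv.Perm (Fin q),
              ((Equiv.Perm.sign (Φmap p q d hd T σ₁ σ₂) : ℤ) : R)
                * ∏ i, M (Φmap p q d hd T σ₁ σ₂ i) i := by
        exact Fintype.sum_prod_type
          (f := fun y => ((Equiv.Perm.sign (Φmap p q d hd T y.1 y.2) : ℤ) : R)
            * ∏ i, M (Φmap p q d hd T y.1 y.2 i) i)
      rw [esplit, Matrix.det_apply', Matrix.det_apply']
      simp only [Finset.mul_sum, Finset.sum_mul]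
      rw [Finset.sum_comm]
      refine Finset.sum_congr rfl fun σ₁ _ => Finset.sum_congr rfl fun σ₂ _ => ?_
      refine Eq.trans ?_ (hval T σ₁ σ₂).symm
      ring
    rw [Matrix.det_apply']
    calc ∑ σ : Equiv.Perm (Fin (p + q)), ((Equiv.Perm.sign σ : ℤ) : R) * ∏ i, M (σ i) i
        = ∑ σ ∈ Finset.univ.filter
            (fun σ : Equiv.Perm (Fin (p + q)) =>
              ∀ j : Fin (p + q), p + d ≤ (j : ℕ) → p ≤ ((σ j : Fin (p + q)) : ℕ)),
            ((Equiv.Perm.sign σ : ℤ) : R) * ∏ i, M (σ i) i := by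
          refine (Finset.sum_filter_of_ne ?_).symm
          intro σ _ hne
          by_contra hP
          push_neg at hP
          obtain ⟨j, hj1, hj2⟩ := hP
          refine hne ?_
          rw [Finset.prod_eq_zero (f := fun i => M (σ i) i) (Finset.mem_univ j)
            (hM (σ j) j (by omega) hj1), mul_zero]
      _ = ∑ x ∈ ((colsB₁ p q d).powersetCard d).attach ×ˢ
            (Finset.univ : Finset (Equiv.Perm (Fin p) × Equiv.Perm (Fin q))),
            ((Equiv.Perm.sign (Φmap p q d hd x.1 x.2.1 x.2.2) : ℤ) : R)
              * ∏ i, M (Φmap p q d hd x.1 x.2.1 x.2.2 i) i := by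
          refine (Finset.sum_bij (fun x _ => Φmap p q d hd x.1 x.2.1 x.2.2)
            ?_ ?_ ?_ ?_).symm
          · -- maps into filter
            rintro ⟨T, y⟩ -
            rw [Finset.mem_filter]
            refine ⟨Finset.mem_univ _, fun j hj => ?_⟩
            exact Φmap_le_of_mem_right T y.1 y.2
              (Finset.mem_union_left _ (mem_colsB₂.mpr hj))
          · -- injective
            intro x hx y hy hE
            have hE' : Φmap p q d hd x.1 x.2.1 x.2.2 = Φmap p q d hd y.1 y.2.1 y.2.2 := hE
            obtain ⟨h1, h2, h3⟩ := Φmap_inj x.1 y.1 x.2.1 y.2.1 x.2.2 y.2.2 hE'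
            exact Prod.ext h1 (Prod.ext h2 h3)
          · -- surjective
            intro σ hσ
            rw [Finset.mem_filter] at hσ
            have hP := hσ.2
            set T : Finset (Fin (p + q)) :=
              Finset.univ.filter
                (fun j : Fin (p + q) => (j : ℕ) < p + d ∧ p ≤ ((σ j : Fin (p + q)) : ℕ))
              with hTdef
            have hTsub : T ⊆ colsB₁ p q d := by
              intro j hj
              rw [mem_colsB₁]
              exact ((Finset.mem_filter.mp hj).2).1
            have hU : (Finset.univ.filter
                (fun j : Fin (p + q) => p ≤ ((σ j : Fin (p + q)) : ℕ))).card = q := by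
              have himg : Finset.univ.filter
                  (fun j : Fin (p + q) => p ≤ ((σ j : Fin (p + q)) : ℕ))
                  = (rowsA₂ p q).image σ.symm := by
                ext j
                simp only [Finset.mem_filter, Finset.mem_univ, true_and, Finset.mem_image,
                  mem_rowsA₂]
                constructor
                · intro h
                  exact ⟨σ j, h, σ.symm_apply_apply j⟩
                · rintro ⟨i, hi, rfl⟩
                  rwa [σ.apply_symm_apply]
              rw [himg, Finset.card_image_of_injective _ σ.symm.injective, card_rowsA₂]
            have hsplit : Finset.univ.filter
                (fun j : Fin (p + q) => p ≤ ((σ j : Fin (p + q)) : ℕ)) = T ∪ colsB₂ p q d := by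
              ext j
              simp only [hTdef, Finset.mem_union, Finset.mem_filter, Finset.mem_univ, true_and,
                mem_colsB₂]
              constructor
              · intro h
                by_cases hj : (j : ℕ) < p + d
                · exact Or.inl ⟨hj, h⟩
                · exact Or.inr (by omega)
              · rintro (⟨_, h⟩ | h)
                · exact h
                · exact hP j h
            have hdisjTB : Disjoint T (colsB₂ p q d) := by
              rw [Finset.disjoint_left]
              intro j hj hj2
              have h1 := ((Finset.mem_filter.mp hj).2).1
              rw [mem_colsB₂] at hj2
              omega
            have hTcard : T.card = d := by
              have hu := Finset.card_union_of_disjoint hdisjTB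
              rw [← hsplit, hU] at hu
              have h2 : (colsB₂ p q d).card = p + q - (p + d) :=
                card_filter_coe_ge (p + q) (p + d) (by omega)
              omega
            have hT : T ∈ (colsB₁ p q d).powersetCard d :=
              Finset.mem_powersetCard.mpr ⟨hTsub, hTcard⟩
            set τ : Equiv.Perm (Fin p ⊕ Fin q) :=
              ((colE p q d hd T hT).trans σ).trans (rowE p q).symm with hτdef
            have hmaps : Set.MapsTo (⇑τ) (Set.range Sum.inl) (Set.range Sum.inl) := by
              rintro x ⟨a, rfl⟩
              have hj := colE_inl_mem (hd := hd) (hT := hT) a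
              have h1 : ((colE p q d hd T hT (Sum.inl a) : Fin (p + q)) : ℕ) < p + d :=
                mem_colsB₁.mp (Finset.mem_sdiff.mp hj).1
              have h2 : colE p q d hd T hT (Sum.inl a) ∉ T := (Finset.mem_sdiff.mp hj).2
              have h3 : ((σ (colE p q d hd T hT (Sum.inl a)) : Fin (p + q)) : ℕ) < p := by
                by_contra hcon
                exact h2 (Finset.mem_filter.mpr ⟨Finset.mem_univ _, h1, by omega⟩)
              obtain ⟨a', ha'⟩ := exists_rowE_inl (mem_rowsA₁.mpr h3)
              refine ⟨a', ?_⟩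
              simp only [hτdef, Equiv.trans_apply]
              rw [← ha', Equiv.symm_apply_apply]
            obtain ⟨⟨σ₁, σ₂⟩, hστ⟩ :=
              Equiv.Perm.mem_sumCongrHom_range_of_perm_mapsTo_inl hmaps
            refine ⟨(⟨T, hT⟩, (σ₁, σ₂)),
              Finset.mem_product.mpr ⟨Finset.mem_attach _ _, Finset.mem_univ _⟩, ?_⟩
            have hsc : Equiv.sumCongr σ₁ σ₂ = τ := hστ
            ext j
            obtain ⟨x, rfl⟩ := (colE p q d hd T hT).surjective j
            rw [show Φmap p q d hd ⟨T, hT⟩ σ₁ σ₂ (colE p q d hd T hT x)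
                = rowE p q (Equiv.sumCongr σ₁ σ₂ x) from Φmap_colE ⟨T, hT⟩ σ₁ σ₂ x, hsc]
            simp [hτdef]
          · rintro ⟨T, y⟩ -
            rfl
      _ = ∑ T ∈ ((colsB₁ p q d).powersetCard d).attach,
            ∑ y : Equiv.Perm (Fin p) × Equiv.Perm (Fin q),
              ((Equiv.Perm.sign (Φmap p q d hd T y.1 y.2) : ℤ) : R)
                * ∏ i, M (Φmap p q d hd T y.1 y.2 i) i := by
          rw [Finset.sum_product]
      _ = ∑ T ∈ ((colsB₁ p q d).powersetCard d).attach,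
            (ηfun p q d hd T.1 : R) *
              (subMat M (rowsA₁ p q) (colsB₁ p q d \ T.1)
                (card_rowsA₁ p q) (card_sdiff_T p q d hd T.1 T.2)).det *
              (subMat M (rowsA₂ p q) (colsB₂ p q d ∪ T.1)
                (card_rowsA₂ p q) (card_union_T p q d hd T.1 T.2)).det :=
          Finset.sum_congr rfl fun T _ => (hTsum T).symm
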